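/- For every integer m ≥ 1 there exists a simple graph F on exactly 2m + 2m² vertices such that: (a) F is 2-degenerate; (b) F contains m² pairwise edge-disjoint cycles of length 4; and consequently (c) at least m² edges must be deleted from F in order to obtain a graph containing no cycle of length 4. -/

import Mathlib

open Finset SimpleGraph
open scoped Classical

/-- `f : A → V` realizes a copy of `H` in `G`: it is injective and maps edges of `H`
to edges of `G`.  The copy itself is the subgraph of `G` whose edge set is the image
of the edge set of `H`. -/
def IsCopy {A V : Type*} (H : SimpleGraph A) (G : SimpleGraph V) (f : A → V) : Prop :=
  Function.Injective f ∧ ∀ a b : A, H.Adj a b → G.Adj (f a) (f b)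

/-- `G` contains a copy of `H` (a subgraph isomorphic to `H`). -/
def ContainsCopy {A V : Type*} (H : SimpleGraph A) (G : SimpleGraph V) : Prop :=
  ∃ f : A → V, IsCopy H G f

/-- The edge set of the copy of `H` in `G` realized by `f`. -/
noncomputable def copyEdges {A V : Type*} [Fintype A] [DecidableEq V]
    (H : SimpleGraph A) (f : A → V) : Finset (Sym2 V) :=
  H.edgeFinset.image (Sym2.map f)

/-- `𝒞` is a collection of pairwise edge-disjoint copies of `H` in `G`. -/
def EdgeDisjointCopies {A V : Type*} [Fintype A] [DecidableEq V]
    (H : SimpleGraph A) (G : SimpleGraph V) (𝒞 : Finset (A → V)) : Prop :=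
  (∀ f ∈ 𝒞, IsCopy H G f) ∧
    ∀ f ∈ 𝒞, ∀ g ∈ 𝒞, f ≠ g → Disjoint (copyEdges H f) (copyEdges H g)

/-- `G` is `p`-degenerate: every nonempty finite vertex set `U` contains a vertex with
at most `p` neighbours inside `U`. -/
def Degenerate {V : Type*} (G : SimpleGraph V) (p : ℕ) : Prop :=
  ∀ U : Finset V, U.Nonempty → ∃ v ∈ U, (U.filter fun u => G.Adj v u).card ≤ p

/-- `G` is `c`-far (in absolute number of edges) from being `H`-free: deleting any set
of at most `c` edges from `G` leaves a graph that contains a copy of `H`. -/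
def FarFromFree {A V : Type*} (H : SimpleGraph A) (G : SimpleGraph V) (c : ℝ) : Prop :=
  ∀ D : Finset (Sym2 V), (D.card : ℝ) ≤ c → ContainsCopy H (G.deleteEdges ↑D)

/-- The number of members of the collection `𝒦` whose copy contains the vertex `v`. -/
noncomputable def collDeg {A V : Type*} (𝒦 : Finset (A → V)) (v : V) : ℕ :=
  (𝒦.filter fun φ => v ∈ Set.range φ).card


abbrev Vtx (m : ℕ) := (Fin m ⊕ Fin m) ⊕ ((Fin m × Fin m) ⊕ (Fin m × Fin m))

def myr (m : ℕ) : Vtx m → Vtx m → Prop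
  | .inl (.inl i), .inr (.inl p) => p.1 = i
  | .inl (.inl i), .inr (.inr p) => p.1 = i
  | .inl (.inr j), .inr (.inl p) => p.2 = j
  | .inl (.inr j), .inr (.inr p) => p.2 = j
  | _, _ => False

def G' (m : ℕ) : SimpleGraph (Vtx m) := SimpleGraph.fromRel (myr m)

lemma card_vtx (m : ℕ) : Fintype.card (Vtx m) = 2 * m + 2 * m ^ 2 := by
  simp [Vtx]; ring

noncomputable def eqv (m : ℕ) : Fin (2 * m + 2 * m ^ 2) ≃ Vtx m :=
  (Fintype.equivFinOfCardEq (card_vtx m)).symm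

-- hub-hub non-adjacent
lemma no_hub_hub (m : ℕ) (x y : Fin m ⊕ Fin m) : ¬ (G' m).Adj (.inl x) (.inl y) := by
  rintro ⟨hne, h | h⟩ <;> rcases x with i | i <;> rcases y with j | j <;> simp [myr] at h

-- leaf-leaf non-adjacent
lemma no_leaf_leaf (m : ℕ) (x y : (Fin m × Fin m) ⊕ (Fin m × Fin m)) :
    ¬ (G' m).Adj (.inr x) (.inr y) := by
  rintro ⟨hne, h | h⟩ <;> rcases x with p | p <;> rcases y with q | q <;> simp [myr] at h

lemma L1_nbrs (m : ℕ) (i j : Fin m) (y : Vtx m)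
    (h : (G' m).Adj (.inr (.inl (i, j))) y) :
    y = .inl (.inl i) ∨ y = .inl (.inr j) := by
  obtain ⟨hne, h | h⟩ := h <;>
    rcases y with (a | a) | (p | p) <;> simp_all [myr]

lemma L2_nbrs (m : ℕ) (i j : Fin m) (y : Vtx m)
    (h : (G' m).Adj (.inr (.inr (i, j))) y) :
    y = .inl (.inl i) ∨ y = .inl (.inr j) := by
  obtain ⟨hne, h | h⟩ := h <;>
    rcases y with (a | a) | (p | p) <;> simp_all [myr]

lemma adj_A_L1 (m : ℕ) (i j : Fin m) : (G' m).Adj (.inl (.inl i)) (.inr (.inl (i, j))) :=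
  ⟨by simp, Or.inl rfl⟩
lemma adj_C_L1 (m : ℕ) (i j : Fin m) : (G' m).Adj (.inl (.inr j)) (.inr (.inl (i, j))) :=
  ⟨by simp, Or.inl rfl⟩
lemma adj_A_L2 (m : ℕ) (i j : Fin m) : (G' m).Adj (.inl (.inl i)) (.inr (.inr (i, j))) :=
  ⟨by simp, Or.inl rfl⟩
lemma adj_C_L2 (m : ℕ) (i j : Fin m) : (G' m).Adj (.inl (.inr j)) (.inr (.inr (i, j))) :=
  ⟨by simp, Or.inl rfl⟩

def cyc (m : ℕ) (i j : Fin m) : Fin 4 → Vtx m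
  | 0 => .inl (.inl i)
  | 1 => .inr (.inl (i, j))
  | 2 => .inl (.inr j)
  | 3 => .inr (.inr (i, j))

def leafIdx (m : ℕ) : Vtx m → Option (Fin m × Fin m)
  | .inr (.inl p) => some p
  | .inr (.inr p) => some p
  | _ => none

lemma cyc_inj (m : ℕ) (i j : Fin m) : Function.Injective (cyc m i j) := by
  intro a b h
  fin_cases a <;> fin_cases b <;> simp_all [cyc]

lemma cyc_adj (m : ℕ) (i j : Fin m) (a b : Fin 4) (hab : (cycleGraph 4).Adj a b) :
    (G' m).Adj (cyc m i j a) (cyc m i j b) := by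
  fin_cases a <;> fin_cases b <;>
    simp only [cyc] <;>
    first
      | exact absurd hab (by decide)
      | exact adj_A_L1 m i j | exact (adj_A_L1 m i j).symm
      | exact adj_C_L1 m i j | exact (adj_C_L1 m i j).symm
      | exact adj_A_L2 m i j | exact (adj_A_L2 m i j).symm
      | exact adj_C_L2 m i j | exact (adj_C_L2 m i j).symm

lemma cyc_leafIdx (m : ℕ) (i j : Fin m) (a : Fin 4) :
    leafIdx m (cyc m i j a) = none ∨ leafIdx m (cyc m i j a) = some (i, j) := by
  fin_cases a <;> simp [cyc, leafIdx]

lemma cycle4_edge_leaf : ∀ a b : Fin 4, (cycleGraph 4).Adj a b →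
    a = 1 ∨ b = 1 ∨ a = 3 ∨ b = 3 := by decide

lemma copyEdges_spec {V : Type*} [DecidableEq V] (f : Fin 4 → V) (s : Sym2 V)
    (hs : s ∈ copyEdges (cycleGraph 4) f) :
    ∃ a b : Fin 4, (cycleGraph 4).Adj a b ∧ s = s(f a, f b) := by
  simp only [copyEdges, mem_image, mem_edgeFinset] at hs
  obtain ⟨z, hz, rfl⟩ := hs
  induction z using Sym2.ind with
  | _ a b =>
    rw [mem_edgeSet] at hz
    exact ⟨a, b, hz, rfl⟩

lemma mem_copyEdges_of_adj {V : Type*} [DecidableEq V] (f : Fin 4 → V) (a b : Fin 4)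
    (hab : (cycleGraph 4).Adj a b) : s(f a, f b) ∈ copyEdges (cycleGraph 4) f :=
  Finset.mem_image.2 ⟨s(a, b), by simp [mem_edgeFinset, hab], rfl⟩

lemma copy_leaf_all (m : ℕ) (i j : Fin m) (s : Sym2 (Fin (2 * m + 2 * m ^ 2)))
    (hs : s ∈ copyEdges (cycleGraph 4) ((eqv m).symm ∘ cyc m i j)) :
    ∀ x ∈ s, leafIdx m (eqv m x) = none ∨ leafIdx m (eqv m x) = some (i, j) := by
  obtain ⟨a, b, hab, rfl⟩ := copyEdges_spec _ s hs
  intro x hx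
  rcases Sym2.mem_iff.1 hx with rfl | rfl <;>
    simp only [Function.comp_apply, Equiv.apply_symm_apply] <;>
    exact cyc_leafIdx m i j _

lemma copy_leaf_ex (m : ℕ) (i j : Fin m) (s : Sym2 (Fin (2 * m + 2 * m ^ 2)))
    (hs : s ∈ copyEdges (cycleGraph 4) ((eqv m).symm ∘ cyc m i j)) :
    ∃ x ∈ s, leafIdx m (eqv m x) = some (i, j) := by
  obtain ⟨a, b, hab, rfl⟩ := copyEdges_spec _ s hs
  rcases cycle4_edge_leaf a b hab with rfl | rfl | rfl | rfl
  · exact ⟨_, Sym2.mem_mk_left _ _, by simp [cyc, leafIdx]⟩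
  · exact ⟨_, Sym2.mem_mk_right _ _, by simp [cyc, leafIdx]⟩
  · exact ⟨_, Sym2.mem_mk_left _ _, by simp [cyc, leafIdx]⟩
  · exact ⟨_, Sym2.mem_mk_right _ _, by simp [cyc, leafIdx]⟩


lemma exists_avoiding {V : Type*} [DecidableEq V] (𝒞 : Finset (Fin 4 → V))
    (hdisj : ∀ f ∈ 𝒞, ∀ g ∈ 𝒞, f ≠ g →
      Disjoint (copyEdges (cycleGraph 4) f) (copyEdges (cycleGraph 4) g))
    (D : Finset (Sym2 V)) (hD : D.card < 𝒞.card) :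
    ∃ f ∈ 𝒞, Disjoint (copyEdges (cycleGraph 4) f) D := by
  by_contra hc
  push_neg at hc
  have hex : ∀ f : Fin 4 → V, ∃ x : Sym2 V,
      f ∈ 𝒞 → x ∈ copyEdges (cycleGraph 4) f ∧ x ∈ D := by
    intro f
    by_cases hf : f ∈ 𝒞
    · obtain ⟨x, hx1, hx2⟩ := Finset.not_disjoint_iff.1 (hc f hf)
      exact ⟨x, fun _ => ⟨hx1, hx2⟩⟩
    · exact ⟨s(f 0, f 0), fun h => absurd h hf⟩
  choose w hw using hex
  have hcard : 𝒞.card ≤ D.card := by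
    apply Finset.card_le_card_of_injOn w (fun f hf => (hw f hf).2)
    intro f hf g hg hfg
    by_contra hne
    exact Finset.disjoint_left.1 (hdisj f hf g hg hne) (hw f hf).1 (hfg ▸ (hw g hg).1)
  omega

/-- For every `m ≥ 1` there is a simple graph `F` on exactly `2m + 2m²`
vertices that is `2`-degenerate, contains `m²` pairwise edge-disjoint `4`-cycles, and from
which at least `m²` edges must be deleted to destroy all `4`-cycles. -/
theorem statement_12 (m : ℕ) (hm : 1 ≤ m) :
    ∃ F : SimpleGraph (Fin (2 * m + 2 * m ^ 2)),
      Degenerate F 2 ∧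
      (∃ 𝒞 : Finset (Fin 4 → Fin (2 * m + 2 * m ^ 2)),
        EdgeDisjointCopies (SimpleGraph.cycleGraph 4) F 𝒞 ∧ m ^ 2 ≤ 𝒞.card) ∧
      (∀ D : Finset (Sym2 (Fin (2 * m + 2 * m ^ 2))), D.card < m ^ 2 →
        ContainsCopy (SimpleGraph.cycleGraph 4) (F.deleteEdges ↑D)) := by
  classical
  refine ⟨SimpleGraph.comap (eqv m) (G' m), ?_, ?_, ?_⟩
  · -- 2-degenerate
    intro U hU
    by_cases hL : ∃ v ∈ U, ∃ p, eqv m v = Sum.inr p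
    · obtain ⟨v, hv, p, hp⟩ := hL
      refine ⟨v, hv, ?_⟩
      have key : ∀ i j : Fin m,
          (eqv m v = Sum.inr (Sum.inl (i, j)) ∨ eqv m v = Sum.inr (Sum.inr (i, j))) →
          (U.filter fun u => (SimpleGraph.comap (eqv m) (G' m)).Adj v u).card ≤ 2 := by
        intro i j hij
        have hsub : (U.filter fun u => (SimpleGraph.comap (eqv m) (G' m)).Adj v u) ⊆
            {(eqv m).symm (Sum.inl (Sum.inl i)), (eqv m).symm (Sum.inl (Sum.inr j))} := by
          intro u hu
          have hadj : (G' m).Adj (eqv m v) (eqv m u) := (Finset.mem_filter.1 hu).2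
          have : eqv m u = Sum.inl (Sum.inl i) ∨ eqv m u = Sum.inl (Sum.inr j) := by
            rcases hij with h | h
            · rw [h] at hadj; exact L1_nbrs m i j _ hadj
            · rw [h] at hadj; exact L2_nbrs m i j _ hadj
          rcases this with h | h
          · simp [← h, Finset.mem_insert]
          · simp [← h, Finset.mem_insert]
        calc (U.filter fun u => (SimpleGraph.comap (eqv m) (G' m)).Adj v u).card
            ≤ _ := Finset.card_le_card hsub
          _ ≤ 2 := (Finset.card_insert_le _ _).trans (by simp)
      rcases p with ⟨i, j⟩ | ⟨i, j⟩
      · exact key i j (Or.inl hp)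
      · exact key i j (Or.inr hp)
    · push_neg at hL
      obtain ⟨v, hv⟩ := hU
      refine ⟨v, hv, ?_⟩
      have : (U.filter fun u => (SimpleGraph.comap (eqv m) (G' m)).Adj v u) = ∅ := by
        rw [Finset.filter_eq_empty_iff]
        intro u hu hadj
        have hadj' : (G' m).Adj (eqv m v) (eqv m u) := hadj
        rcases hev : eqv m v with x | x
        · rcases heu : eqv m u with y | y
          · rw [hev, heu] at hadj'; exact no_hub_hub m x y hadj'
          · exact hL u hu y heu
        · exact hL v hv x hev
      convert Nat.zero_le 2
      exact Finset.card_eq_zero.2 (by convert this)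
  · -- edge-disjoint copies
    refine ⟨(Finset.univ : Finset (Fin m × Fin m)).image
        (fun p => (eqv m).symm ∘ cyc m p.1 p.2), ⟨?_, ?_⟩, ?_⟩
    · intro f hf
      simp only [Finset.mem_image, Finset.mem_univ, true_and] at hf
      obtain ⟨p, rfl⟩ := hf
      refine ⟨(eqv m).symm.injective.comp (cyc_inj m p.1 p.2), fun a b hab => ?_⟩
      show (G' m).Adj _ _
      simp only [Function.comp_apply, Equiv.apply_symm_apply]
      exact cyc_adj m p.1 p.2 a b hab
    · intro f hf g hg hne
      simp only [Finset.mem_image, Finset.mem_univ, true_and] at hf hg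
      obtain ⟨p, rfl⟩ := hf
      obtain ⟨q, rfl⟩ := hg
      have hpq : p ≠ q := fun h => hne (by rw [h])
      rw [Finset.disjoint_left]
      intro s hsf hsg
      obtain ⟨x, hxs, hx⟩ := copy_leaf_ex m p.1 p.2 s hsf
      rcases copy_leaf_all m q.1 q.2 s hsg x hxs with h | h
      · rw [hx] at h; cases h
      · rw [hx] at h
        exact hpq (Prod.ext_iff.2 ⟨congrArg Prod.fst (Option.some.inj h),
          congrArg Prod.snd (Option.some.inj h)⟩)
    · have hinj : Function.Injective
          (fun p : Fin m × Fin m => (eqv m).symm ∘ cyc m p.1 p.2) := by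
        intro p q h
        have h1 := congrFun h 1
        simp only [Function.comp_apply] at h1
        have := (eqv m).symm.injective h1
        simpa [cyc, Prod.ext_iff] using this
      rw [Finset.card_image_of_injective _ hinj]
      simp [pow_two]
  · -- far from C4-free
    intro D hD
    set 𝒞 := (Finset.univ : Finset (Fin m × Fin m)).image
        (fun p => (eqv m).symm ∘ cyc m p.1 p.2) with h𝒞
    have hdisj : ∀ f ∈ 𝒞, ∀ g ∈ 𝒞, f ≠ g →
        Disjoint (copyEdges (cycleGraph 4) f) (copyEdges (cycleGraph 4) g) := by
      intro f hf g hg hne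
      simp only [h𝒞, Finset.mem_image, Finset.mem_univ, true_and] at hf hg
      obtain ⟨p, rfl⟩ := hf
      obtain ⟨q, rfl⟩ := hg
      have hpq : p ≠ q := fun h => hne (by rw [h])
      rw [Finset.disjoint_left]
      intro s hsf hsg
      obtain ⟨x, hxs, hx⟩ := copy_leaf_ex m p.1 p.2 s hsf
      rcases copy_leaf_all m q.1 q.2 s hsg x hxs with h | h
      · rw [hx] at h; cases h
      · rw [hx] at h
        exact hpq (Prod.ext_iff.2 ⟨congrArg Prod.fst (Option.some.inj h),
          congrArg Prod.snd (Option.some.inj h)⟩)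
    have hcard : 𝒞.card = m ^ 2 := by
      have hinj : Function.Injective
          (fun p : Fin m × Fin m => (eqv m).symm ∘ cyc m p.1 p.2) := by
        intro p q h
        have h1 := congrFun h 1
        simp only [Function.comp_apply] at h1
        have := (eqv m).symm.injective h1
        simpa [cyc, Prod.ext_iff] using this
      rw [h𝒞, Finset.card_image_of_injective _ hinj]
      simp [pow_two]
    obtain ⟨f, hf, hfd⟩ := exists_avoiding 𝒞 hdisj D (by omega)
    have hfp : ∃ p : Fin m × Fin m, f = (eqv m).symm ∘ cyc m p.1 p.2 := by
      simp only [h𝒞, Finset.mem_image, Finset.mem_univ, true_and] at hf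
      obtain ⟨p, rfl⟩ := hf
      exact ⟨p, rfl⟩
    obtain ⟨p, rfl⟩ := hfp
    refine ⟨(eqv m).symm ∘ cyc m p.1 p.2,
      (eqv m).symm.injective.comp (cyc_inj m p.1 p.2), fun a b hab => ?_⟩
    rw [SimpleGraph.deleteEdges_adj]
    constructor
    · show (G' m).Adj _ _
      simp only [Function.comp_apply, Equiv.apply_symm_apply]
      exact cyc_adj m p.1 p.2 a b hab
    · intro hmem
      exact Finset.disjoint_left.1 hfd
        (mem_copyEdges_of_adj _ a b hab) (Finset.mem_coe.1 hmem)
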